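/- The complex matrix equation X - AXB = C has a unique solution if and only if λμ ≠ 1 for every eigenvalue λ of A and every eigenvalue μ of B. -/

import Mathlib

open Matrix Polynomial

private lemma spec_iff_eval {k : ℕ} (M : Matrix (Fin k) (Fin k) ℂ) (x : ℂ) :
    x ∈ spectrum ℂ M ↔ M.charpoly.eval x = 0 := by
  rw [spectrum.mem_iff, Matrix.isUnit_iff_isUnit_det, isUnit_iff_ne_zero, not_not,
    Matrix.charpoly, _root_.eval_det, matPolyEquiv_charmatrix]
  simp [Algebra.algebraMap_eq_smul_one, ← Matrix.smul_one_eq_diagonal]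

private lemma spec_iff_det {k : ℕ} (M : Matrix (Fin k) (Fin k) ℂ) (x : ℂ) :
    x ∈ spectrum ℂ M ↔ (x • (1 : Matrix (Fin k) (Fin k) ℂ) - M).det = 0 := by
  rw [spectrum.mem_iff, Matrix.isUnit_iff_isUnit_det, isUnit_iff_ne_zero, not_not,
    Algebra.algebraMap_eq_smul_one]

private lemma eigvec_of_spec {k : ℕ} {M : Matrix (Fin k) (Fin k) ℂ} {x : ℂ}
    (h : x ∈ spectrum ℂ M) : ∃ v ≠ 0, M.mulVec v = x • v := by
  rw [spec_iff_det] at h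
  obtain ⟨v, hv, hveq⟩ := (Matrix.exists_mulVec_eq_zero_iff).mpr h
  refine ⟨v, hv, ?_⟩
  have := hveq
  rw [Matrix.sub_mulVec, Matrix.smul_mulVec, Matrix.one_mulVec, sub_eq_zero] at this
  exact this.symm

private lemma spec_transpose {k : ℕ} (M : Matrix (Fin k) (Fin k) ℂ) (x : ℂ) :
    x ∈ spectrum ℂ Mᵀ ↔ x ∈ spectrum ℂ M := by
  rw [spec_iff_det, spec_iff_det M]
  constructor <;> intro h
  · rw [← Matrix.det_transpose]
    simpa [Matrix.transpose_sub] using h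
  · rw [← Matrix.det_transpose] at h
    simpa [Matrix.transpose_sub] using h

/-- Injectivity: if no product of eigenvalues equals 1, then `X = A X B` implies `X = 0`. -/
private lemma stein_injective {m n : ℕ}
    (A : Matrix (Fin m) (Fin m) ℂ) (B : Matrix (Fin n) (Fin n) ℂ)
    (hspec : ∀ lam ∈ spectrum ℂ A, ∀ mu ∈ spectrum ℂ B, lam * mu ≠ 1)
    (X : Matrix (Fin m) (Fin n) ℂ) (hX : X = A * X * B) : X = 0 := by
  rcases Nat.eq_zero_or_pos n with hn | hn
  · subst hn; exact Subsingleton.elim X 0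
  by_contra hX0
  have hiter : ∀ k : ℕ, X = A ^ k * X * B ^ k := by
    intro k
    induction k with
    | zero => simp
    | succ k ih =>
      calc X = A * X * B := hX
      _ = A * (A ^ k * X * B ^ k) * B := by rw [← ih]
      _ = A ^ (k + 1) * X * B ^ (k + 1) := by
          rw [pow_succ' A, pow_succ B]
          simp only [Matrix.mul_assoc]
  set p := A.charpoly with hp
  set d := p.natDegree with hd
  set q : ℂ[X] := ∑ k ∈ Finset.range (d + 1), Polynomial.C (p.coeff k) * Polynomial.X ^ (d - k)
    with hq
  have haeq : aeval B q = ∑ k ∈ Finset.range (d + 1), p.coeff k • B ^ (d - k) := by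
    rw [hq, map_sum]
    refine Finset.sum_congr rfl fun k _ => ?_
    rw [_root_.map_mul, map_pow, aeval_C, aeval_X, ← Algebra.smul_def]
  have hXq : X * aeval B q = 0 := by
    rw [haeq, Matrix.mul_sum]
    have : ∀ k ∈ Finset.range (d + 1),
        X * p.coeff k • B ^ (d - k) = p.coeff k • (A ^ k * X * B ^ d) := by
      intro k hk
      rw [Finset.mem_range, Nat.lt_succ_iff] at hk
      rw [Matrix.mul_smul]
      congr 1
      calc X * B ^ (d - k) = A ^ k * X * B ^ k * B ^ (d - k) := by rw [← hiter k]
      _ = A ^ k * X * B ^ d := by rw [Matrix.mul_assoc (A ^ k * X), ← pow_add,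
            Nat.add_sub_cancel' hk]
    rw [Finset.sum_congr rfl this]
    have : ∑ k ∈ Finset.range (d + 1), p.coeff k • (A ^ k * X * B ^ d)
        = (∑ k ∈ Finset.range (d + 1), p.coeff k • A ^ k) * X * B ^ d := by
      rw [Matrix.sum_mul, Matrix.sum_mul]
      refine congrArg _ (funext fun k => ?_)
      rw [Matrix.smul_mul, Matrix.smul_mul]
    rw [this, hd, ← Polynomial.aeval_eq_sum_range, hp, Matrix.aeval_self_charpoly,
      Matrix.zero_mul, Matrix.zero_mul]
  have hnu : ¬ IsUnit (aeval B q) := by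
    intro hu
    obtain ⟨u, hu⟩ := hu
    apply hX0
    have h1 : aeval B q * (↑u⁻¹ : Matrix (Fin n) (Fin n) ℂ) = 1 := by
      rw [← hu]; exact u.mul_inv
    calc X = X * (aeval B q * (↑u⁻¹ : Matrix (Fin n) (Fin n) ℂ)) := by
            rw [h1, Matrix.mul_one]
    _ = X * aeval B q * (↑u⁻¹ : Matrix (Fin n) (Fin n) ℂ) := by rw [Matrix.mul_assoc]
    _ = 0 := by rw [hXq, Matrix.zero_mul]
  have h0spec : (0 : ℂ) ∈ spectrum ℂ (aeval B q) := by
    rw [spectrum.mem_iff]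
    simpa using hnu
  have hinst : Nonempty (Fin n) := ⟨⟨0, hn⟩⟩
  have hBne : (spectrum ℂ B).Nonempty :=
    spectrum.nonempty_of_isAlgClosed_of_finiteDimensional ℂ B
  rw [spectrum.map_polynomial_aeval_of_nonempty B q hBne] at h0spec
  obtain ⟨mu, hmu, hmueval⟩ := h0spec
  replace hmueval : Polynomial.eval mu q = 0 := hmueval
  -- `q.eval 0 = 1`, so `mu ≠ 0`
  have hq0 : q.eval 0 = 1 := by
    rw [hq]
    rw [Polynomial.eval_finset_sum]
    rw [Finset.sum_eq_single d]
    · simp [Matrix.charpoly_monic A |>.coeff_natDegree]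
      exact (Matrix.charpoly_monic A).coeff_natDegree
    · intro k hk hkd
      rw [Finset.mem_range, Nat.lt_succ_iff] at hk
      have : d - k ≠ 0 := by omega
      simp [this]
    · intro h; exact absurd (Finset.self_mem_range_succ d) h
  have hmu0 : mu ≠ 0 := by
    rintro rfl
    rw [hq0] at hmueval
    exact one_ne_zero hmueval
  -- relate q.eval mu to p.eval mu⁻¹
  have hqp : q.eval mu = mu ^ d * p.eval mu⁻¹ := by
    rw [hq, Polynomial.eval_finset_sum, Polynomial.eval_eq_sum_range, Finset.mul_sum]
    apply Finset.sum_congr rfl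
    intro k hk
    rw [Finset.mem_range, Nat.lt_succ_iff] at hk
    rw [Polynomial.eval_mul, Polynomial.eval_C, Polynomial.eval_pow, Polynomial.eval_X]
    rw [pow_sub₀ mu hmu0 hk]
    field_simp
    rw [mul_assoc, ← mul_pow, mul_one_div_cancel hmu0, one_pow, mul_one]
  have hpev : p.eval mu⁻¹ = 0 := by
    rw [hqp] at hmueval
    rcases mul_eq_zero.mp hmueval with h | h
    · exact absurd h (pow_ne_zero d hmu0)
    · exact h
  have hlam : mu⁻¹ ∈ spectrum ℂ A := (spec_iff_eval A mu⁻¹).mpr hpev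
  exact hspec mu⁻¹ hlam mu hmu (inv_mul_cancel₀ hmu0)

theorem stein_unique_solution {m n : ℕ}
    (A : Matrix (Fin m) (Fin m) ℂ) (B : Matrix (Fin n) (Fin n) ℂ)
    (C : Matrix (Fin m) (Fin n) ℂ) :
    (∃! X : Matrix (Fin m) (Fin n) ℂ, X - A * X * B = C) ↔
    ∀ lam ∈ spectrum ℂ A, ∀ mu ∈ spectrum ℂ B, lam * mu ≠ 1 := by
  constructor
  · rintro ⟨X₀, hX₀, huniq⟩ lam hlam mu hmu hlm
    -- build a nonzero fixed point of X ↦ A X B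
    obtain ⟨v, hv, hveq⟩ := eigvec_of_spec hlam
    obtain ⟨w, hw, hweq⟩ := eigvec_of_spec ((spec_transpose B mu).mpr hmu)
    set Y : Matrix (Fin m) (Fin n) ℂ := vecMulVec v w with hY
    have hYfix : A * Y * B = Y := by
      ext i j
      have h1 : (A * Y * B) i j = (A.mulVec v i) * (Bᵀ.mulVec w j) := by
        simp only [Matrix.mul_apply, Matrix.vecMulVec_apply, hY, Matrix.mulVec,
          dotProduct, Matrix.transpose_apply, Finset.sum_mul, Finset.mul_sum]
        refine Finset.sum_congr rfl fun l _ => Finset.sum_congr rfl fun k _ => by ring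
      rw [h1, hveq, hweq]
      simp [hY, Matrix.vecMulVec_apply, Pi.smul_apply, smul_eq_mul]
      calc lam * v i * (mu * w j) = (lam * mu) * (v i * w j) := by ring
      _ = v i * w j := by rw [hlm, one_mul]
    have hYne : Y ≠ 0 := by
      obtain ⟨i, hi⟩ := Function.ne_iff.mp hv
      obtain ⟨j, hj⟩ := Function.ne_iff.mp hw
      intro h
      have := congrFun (congrFun h i) j
      simp [hY, Matrix.vecMulVec_apply] at this
      rcases this with h' | h'
      · exact hi h'
      · exact hj h'
    have : X₀ + Y = X₀ := by
      apply huniq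
      rw [Matrix.mul_add, Matrix.add_mul, hYfix]
      calc X₀ + Y - (A * X₀ * B + Y) = X₀ - A * X₀ * B := by abel
      _ = C := hX₀
    exact hYne (add_left_cancel (this.trans (add_zero X₀).symm))
  · intro hspec
    set L : Matrix (Fin m) (Fin n) ℂ →ₗ[ℂ] Matrix (Fin m) (Fin n) ℂ :=
      { toFun := fun X => X - A * X * B
        map_add' := by
          intro X Y
          simp [Matrix.mul_add, Matrix.add_mul]
          abel
        map_smul' := by
          intro c X
          simp only [RingHom.id_apply, Matrix.mul_smul, Matrix.smul_mul, smul_sub] } with hL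
    have hinj : Function.Injective L := by
      rw [← LinearMap.ker_eq_bot, LinearMap.ker_eq_bot']
      intro X hXker
      have : X - A * X * B = 0 := hXker
      exact stein_injective A B hspec X (sub_eq_zero.mp this)
    have hsurj : Function.Surjective L := LinearMap.surjective_of_injective hinj
    obtain ⟨X₀, hX₀⟩ := hsurj C
    exact ⟨X₀, hX₀, fun Y hY => hinj (hY.trans hX₀.symm)⟩
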